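/- For any string T of length n ≥ 2, el(T)/er(T) ≤ min{2n/σ, σ}, where σ is the number of distinct letters in T and el(T), er(T) are the total numbers of left and right extensions of maximal repeats of T. Equivalently, el(T) ≤ min{2n/σ, σ} · er(T). -/

import Mathlib

open Finset

variable {α : Type*}

/-- Number of occurrences of `S` in `T`: positions `i` with `T[i..i+|S|-1] = S`. -/
def occ [DecidableEq α] (T S : List α) : ℕ :=
  ((Finset.range (T.length + 1)).filter fun i => (T.drop i).take S.length = S).card

/-- `S` is a maximal repeat of `T`. -/
def MaxRepeat [DecidableEq α] (T S : List α) : Prop :=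
  2 ≤ occ T S ∧ ∀ a : α, occ T (a :: S) < occ T S ∧ occ T (S ++ [a]) < occ T S

instance [DecidableEq α] [Fintype α] (T S : List α) : Decidable (MaxRepeat T S) := by
  unfold MaxRepeat; infer_instance

/-- The finite set of maximal repeats of `T`. -/
def MRset [DecidableEq α] [Fintype α] (T : List α) : Finset (List α) :=
  (T.tails.flatMap List.inits).toFinset.filter fun S => MaxRepeat T S

/-- Number of right extensions of `S` in `T`. -/
def rext [DecidableEq α] [Fintype α] (T S : List α) : ℕ :=
  (Finset.univ.filter fun a : α => (S ++ [a]) <:+: T).card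

/-- Number of left extensions of `S` in `T`. -/
def lext [DecidableEq α] [Fintype α] (T S : List α) : ℕ :=
  (Finset.univ.filter fun a : α => (a :: S) <:+: T).card

/-- Total number of right extensions of maximal repeats of `T`. -/
def er [DecidableEq α] [Fintype α] (T : List α) : ℕ := ∑ S ∈ MRset T, rext T S

/-- Total number of left extensions of maximal repeats of `T`. -/
def el [DecidableEq α] [Fintype α] (T : List α) : ℕ := ∑ S ∈ MRset T, lext T S


/-! ### Auxiliary development -/

set_option linter.unusedSectionVars false

section AuxDev
variable [DecidableEq α]

/-- The finite set of occurrence positions of `S` in `T`. -/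
def occs (T S : List α) : Finset ℕ :=
  (Finset.range (T.length + 1)).filter fun i => (T.drop i).take S.length = S

lemma occ_eq_card (T S : List α) : occ T S = (occs T S).card := rfl

lemma mem_occs {T S : List α} {i : ℕ} :
    i ∈ occs T S ↔ i ≤ T.length ∧ S <+: T.drop i := by
  simp only [occs, Finset.mem_filter, Finset.mem_range, Nat.lt_succ_iff]
  constructor
  · rintro ⟨h1, h2⟩; exact ⟨h1, List.prefix_iff_eq_take.2 h2.symm⟩
  · rintro ⟨h1, h2⟩; exact ⟨h1, (List.prefix_iff_eq_take.1 h2).symm⟩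

lemma occs_len {T S : List α} {i : ℕ} (h : i ∈ occs T S) :
    i + S.length ≤ T.length := by
  obtain ⟨h1, h2⟩ := mem_occs.1 h
  have := h2.length_le
  rw [List.length_drop] at this
  omega

lemma infix_iff_occs {T S : List α} :
    S <:+: T ↔ (occs T S).Nonempty := by
  constructor
  · intro h
    obtain ⟨t, hp, hs⟩ := List.infix_iff_prefix_suffix.1 h
    refine ⟨T.length - t.length, mem_occs.2 ⟨by omega, ?_⟩⟩
    rwa [← List.suffix_iff_eq_drop.1 hs]
  · rintro ⟨i, hi⟩
    obtain ⟨h1, h2⟩ := mem_occs.1 hi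
    exact List.infix_iff_prefix_suffix.2 ⟨T.drop i, h2, List.drop_suffix i T⟩

lemma shift_mem {T Z Z' : List α} {j : ℕ} (h : Z <:+ Z') (hj : j ∈ occs T Z') :
    j + (Z'.length - Z.length) ∈ occs T Z := by
  obtain ⟨u, hu⟩ := h
  obtain ⟨hj1, hj2⟩ := mem_occs.1 hj
  have hl : Z'.length = u.length + Z.length := by rw [← hu, List.length_append]
  have hlen := occs_len hj
  refine mem_occs.2 ⟨by omega, ?_⟩
  have hd : Z'.length - Z.length = u.length := by omega
  rw [hd]
  obtain ⟨r, hr⟩ := hj2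
  refine ⟨r, ?_⟩
  rw [← List.drop_drop, ← hr, ← hu, List.append_assoc, List.drop_left]

lemma occ_le_of_suffix {T Z Z' : List α} (h : Z <:+ Z') :
    (occs T Z').card ≤ (occs T Z).card := by
  apply Finset.card_le_card_of_injOn (· + (Z'.length - Z.length))
  · exact fun j hj => shift_mem h hj
  · intro a _ b _ hab; simpa using hab

lemma seg_suffix {T Z Z' : List α} {j j' : ℕ} (hj : j ∈ occs T Z) (hj' : j' ∈ occs T Z')
    (he : j + Z.length = j' + Z'.length) (hl : Z.length ≤ Z'.length) : Z <:+ Z' := by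
  have h1 : Z = (T.drop j).take Z.length := List.prefix_iff_eq_take.1 (mem_occs.1 hj).2
  have h2 : Z' = (T.drop j').take Z'.length := List.prefix_iff_eq_take.1 (mem_occs.1 hj').2
  rw [List.suffix_iff_eq_drop]
  have key : ((T.drop j').take Z'.length).drop (Z'.length - Z.length)
      = (T.drop (j' + (Z'.length - Z.length))).take (Z'.length - (Z'.length - Z.length)) := by
    rw [List.drop_take, List.drop_drop]
  calc Z = (T.drop j).take Z.length := h1
    _ = (T.drop (j' + (Z'.length - Z.length))).take (Z'.length - (Z'.length - Z.length)) := by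
        congr 2 <;> omega
    _ = ((T.drop j').take Z'.length).drop (Z'.length - Z.length) := key.symm
    _ = Z'.drop (Z'.length - Z.length) := by rw [← h2]

lemma seg_eq {T Z Z' : List α} {j j' : ℕ} (hj : j ∈ occs T Z) (hj' : j' ∈ occs T Z')
    (he : j + Z.length = j' + Z'.length) (hl : Z.length = Z'.length) : Z = Z' :=
  ((seg_suffix hj hj' he hl.le).sublist).eq_of_length hl

/-- The symbol in `T` just before position `q` (`none` if `q = 0`). -/
def sym (T : List α) (q : ℕ) : Option α := if q = 0 then none else T[q-1]?

lemma sym_shift {T Z' : List α} {j d : ℕ} (hj : j ∈ occs T Z') (hd : 1 ≤ d)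
    (hdl : d ≤ Z'.length) : sym T (j + d) = Z'[d-1]? := by
  obtain ⟨r, hr⟩ := (mem_occs.1 hj).2
  have h1 : sym T (j + d) = T[j + d - 1]? := by simp [sym]; omega
  have h2 : T[j + d - 1]? = (T.drop j)[d-1]? := by
    rw [List.getElem?_drop]; congr 1; omega
  rw [h1, h2, ← hr, List.getElem?_append, if_pos (by omega)]

noncomputable def p1 (T W : List α) : ℕ := sInf {i | i ∈ occs T W}

noncomputable def extW (T W : List α) (ℓ : ℕ) : List α :=
  (T.drop (p1 T W - ℓ)).take (ℓ + W.length)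

noncomputable def bigL (T W : List α) : ℕ :=
  Nat.findGreatest (fun ℓ => (occs T (extW T W ℓ)).card = (occs T W).card) (p1 T W)

noncomputable def Vx (T W : List α) : List α := extW T W (bigL T W)

noncomputable def dsetx (T Z : List α) : Finset ℕ :=
  (occs T Z).filter fun q => sym T q ≠ sym T (p1 T Z)

noncomputable def epos (T Z : List α) : ℕ := sInf {q | q ∈ dsetx T Z} + Z.length

noncomputable def psi (T W : List α) : ℕ :=
  if (occs T W).card ≤ 1 then p1 T W + W.length else T.length + epos T (Vx T W)

lemma p1_mem {T W : List α} (h : (occs T W).Nonempty) : p1 T W ∈ occs T W :=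
  Nat.sInf_mem (by obtain ⟨i, hi⟩ := h; exact ⟨i, hi⟩)

lemma p1_min {T W : List α} {i : ℕ} (h : i ∈ occs T W) : p1 T W ≤ i :=
  Nat.sInf_le h

lemma ext_spec {T W : List α} {i ℓ : ℕ} (hi : i ∈ occs T W) (hl : ℓ ≤ i) :
    ((T.drop (i - ℓ)).take (ℓ + W.length)).length = ℓ + W.length ∧
    W <:+ (T.drop (i - ℓ)).take (ℓ + W.length) ∧
    (i - ℓ) ∈ occs T ((T.drop (i - ℓ)).take (ℓ + W.length)) := by
  have hlen := occs_len hi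
  have hin := mem_occs.1 hi
  set E := (T.drop (i - ℓ)).take (ℓ + W.length) with hE
  have hElen : E.length = ℓ + W.length := by
    rw [hE, List.length_take, List.length_drop]; omega
  have hdropE : E.drop ℓ = W := by
    rw [hE, List.drop_take, List.drop_drop]
    have e1 : i - ℓ + ℓ = i := by omega
    have e2 : ℓ + W.length - ℓ = W.length := by omega
    rw [e1, e2]
    exact (List.prefix_iff_eq_take.1 hin.2).symm
  refine ⟨hElen, ⟨E.take ℓ, by rw [← hdropE]; exact List.take_append_drop ℓ E⟩, ?_⟩
  refine mem_occs.2 ⟨by omega, ?_⟩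
  have : E <+: T.drop (i - ℓ) := by rw [hE]; exact List.take_prefix _ _
  exact this

lemma extW_zero {T W : List α} (h : (occs T W).Nonempty) : extW T W 0 = W := by
  have hm := p1_mem h
  rw [extW]
  have h0 : p1 T W - 0 = p1 T W := rfl
  rw [h0]
  have hin := mem_occs.1 hm
  rw [Nat.zero_add]
  exact (List.prefix_iff_eq_take.1 hin.2).symm

lemma bigL_le {T W : List α} : bigL T W ≤ p1 T W := Nat.findGreatest_le _

lemma Vx_card {T W : List α} (h : (occs T W).Nonempty) :
    (occs T (Vx T W)).card = (occs T W).card := by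
  have := Nat.findGreatest_spec
    (P := fun ℓ => (occs T (extW T W ℓ)).card = (occs T W).card)
    (Nat.zero_le (p1 T W)) (by beta_reduce; rw [extW_zero h])
  simpa [Vx, bigL] using this

lemma Vx_spec {T W : List α} (h : (occs T W).Nonempty) :
    (Vx T W).length = bigL T W + W.length ∧ W <:+ Vx T W ∧
      (p1 T W - bigL T W) ∈ occs T (Vx T W) :=
  ext_spec (p1_mem h) bigL_le

lemma occ_cons_of_sym {T Z : List α} {c : α}
    (h : ∀ q ∈ occs T Z, sym T q = some c) :
    (occs T Z).card ≤ (occs T (c :: Z)).card := by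
  apply Finset.card_le_card_of_injOn (· - 1)
  · intro q hq
    have hs := h q hq
    have hq0 : q ≠ 0 := by rintro rfl; simp [sym] at hs
    have h1 : T[q-1]? = some c := by simpa [sym, hq0] using hs
    have hlt : q - 1 < T.length := by
      by_contra hc
      rw [List.getElem?_eq_none (by omega)] at h1
      exact nomatch h1
    obtain ⟨hqn, r, hr⟩ := mem_occs.1 hq
    refine mem_occs.2 ⟨by beta_reduce; omega, ⟨r, ?_⟩⟩
    have hd : T.drop (q-1) = c :: T.drop q := by
      rw [List.drop_eq_getElem_cons hlt]
      have : T[q-1] = c := by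
        rw [List.getElem?_eq_getElem hlt] at h1
        exact Option.some.inj h1
      have e : q - 1 + 1 = q := by omega
      rw [this, e]
    rw [hd, List.cons_append, hr]
  · intro a ha b hb hab
    have ha0 : a ≠ 0 := by
      rintro rfl; have := h 0 ha; simp [sym] at this
    have hb0 : b ≠ 0 := by
      rintro rfl; have := h 0 hb; simp [sym] at this
    simp only at hab
    omega

lemma dsetx_nonempty {T W : List α} (hW : W ≠ []) (h2 : 2 ≤ (occs T W).card) :
    (dsetx T (Vx T W)).Nonempty := by
  have hne : (occs T W).Nonempty := Finset.card_pos.1 (by omega)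
  obtain ⟨hZlen, hZsuf, hZocc⟩ := Vx_spec (T := T) (W := W) hne
  have hZcard : (occs T (Vx T W)).card = (occs T W).card := Vx_card hne
  have hWlen : 1 ≤ W.length := List.length_pos_iff.2 hW
  set Z := Vx T W with hZ
  have hZne : (occs T Z).Nonempty := Finset.card_pos.1 (by omega)
  by_contra hcon
  rw [Finset.not_nonempty_iff_eq_empty] at hcon
  have hall : ∀ q ∈ occs T Z, sym T q = sym T (p1 T Z) := by
    intro q hq
    by_contra hne'
    have : q ∈ dsetx T Z := Finset.mem_filter.2 ⟨hq, hne'⟩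
    rw [hcon] at this
    exact absurd this (Finset.notMem_empty q)
  have hsym_some : ∀ q ∈ occs T Z, q ≠ 0 → ∃ c, sym T q = some c := by
    intro q hq hq0
    have hql := occs_len hq
    have hlt : q - 1 < T.length := by omega
    exact ⟨T[q-1], by simp [sym, hq0, List.getElem?_eq_getElem hlt]⟩
  cases hs : sym T (p1 T Z) with
  | none =>
    have hz : ∀ q ∈ occs T Z, q = 0 := by
      intro q hq
      by_contra hq0
      obtain ⟨c, hc⟩ := hsym_some q hq hq0
      rw [hall q hq, hs] at hc
      exact nomatch hc
    have : (occs T Z).card ≤ 1 :=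
      Finset.card_le_one.2 fun a ha b hb => by rw [hz a ha, hz b hb]
    omega
  | some c =>
    have hall' : ∀ q ∈ occs T Z, sym T q = some c := fun q hq => (hall q hq).trans hs
    have hLne : bigL T W ≠ p1 T W := by
      intro he
      have h0 : (0:ℕ) ∈ occs T Z := by
        have := hZocc
        rw [he, Nat.sub_self] at this
        exact this
      have := hall' 0 h0
      simp [sym] at this
    have hble := bigL_le (T := T) (W := W)
    have hLlt : bigL T W + 1 ≤ p1 T W := by omega
    set k := p1 T W - bigL T W with hk
    have hk1 : 1 ≤ k := by omega
    have hkc := hall' k hZocc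
    have hkc' : T[k-1]? = some c := by
      have hk0 : k ≠ 0 := by omega
      simpa [sym, hk0] using hkc
    have hklt : k - 1 < T.length := by
      by_contra hc2
      rw [List.getElem?_eq_none (by omega)] at hkc'
      exact nomatch hkc'
    have hgetk : T[k-1] = c := by
      rw [List.getElem?_eq_getElem hklt] at hkc'
      exact Option.some.inj hkc'
    have hext : extW T W (bigL T W + 1) = c :: Z := by
      rw [extW]
      have e1 : p1 T W - (bigL T W + 1) = k - 1 := by omega
      rw [e1, List.drop_eq_getElem_cons hklt, hgetk]
      have e2 : k - 1 + 1 = k := by omega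
      have e3 : bigL T W + 1 + W.length = (bigL T W + W.length) + 1 := by omega
      rw [e2, e3, List.take_succ_cons]
      congr 1
    have hP : (occs T (extW T W (bigL T W + 1))).card = (occs T W).card := by
      rw [hext]
      have hle1 : (occs T (c :: Z)).card ≤ (occs T Z).card := occ_le_of_suffix ⟨[c], rfl⟩
      have hle2 := occ_cons_of_sym hall'
      omega
    exact Nat.findGreatest_is_greatest (Nat.lt_succ_self _) hLlt hP

lemma suffix_of_suffix_le {Z W W' : List α} (hs : W <:+ Z) (hs' : W' <:+ Z)
    (hl : W.length ≤ W'.length) : W <:+ W' := by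
  rcases List.suffix_or_suffix_of_suffix hs hs' with h | h
  · exact h
  · have he : W' = W := h.sublist.eq_of_length (le_antisymm h.length_le hl)
    rw [he]

lemma epos_def (T Z : List α) : epos T Z = sInf {q | q ∈ dsetx T Z} + Z.length := rfl

lemma no_cross {T Z Z' : List α} (hd : (dsetx T Z).Nonempty) (hd' : (dsetx T Z').Nonempty)
    (hocc' : (occs T Z').Nonempty) (hlen : Z.length < Z'.length)
    (heq : epos T Z = epos T Z') : False := by
  set qE := sInf {q | q ∈ dsetx T Z} with hqEdef
  set qE' := sInf {q | q ∈ dsetx T Z'} with hqE'def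
  obtain ⟨x, hx⟩ := hd
  obtain ⟨x', hx'⟩ := hd'
  have hqE : qE ∈ dsetx T Z := Nat.sInf_mem ⟨x, hx⟩
  have hqE' : qE' ∈ dsetx T Z' := Nat.sInf_mem ⟨x', hx'⟩
  obtain ⟨hqEo, hqEs⟩ := Finset.mem_filter.1 hqE
  obtain ⟨hqE'o, hqE's⟩ := Finset.mem_filter.1 hqE'
  rw [epos_def, epos_def, ← hqEdef, ← hqE'def] at heq
  have hZsuf : Z <:+ Z' := seg_suffix hqEo hqE'o heq hlen.le
  set d := Z'.length - Z.length with hddef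
  have hd1 : 1 ≤ d := by omega
  have hkey : ∀ q ∈ occs T Z', sym T (q + d) = Z'[d-1]? := fun q hq =>
    sym_shift hq hd1 (by omega)
  have hf' : p1 T Z' ∈ occs T Z' := p1_mem hocc'
  have hf'lt : p1 T Z' < qE' := by
    rcases lt_or_eq_of_le (p1_min hqE'o) with h | h
    · exact h
    · exact absurd (congrArg (sym T) h.symm) hqE's
  have hqEeq : qE = qE' + d := by omega
  have hsymqE : sym T qE = Z'[d-1]? := by rw [hqEeq]; exact hkey qE' hqE'o
  have hsymf : sym T (p1 T Z) ≠ Z'[d-1]? := by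
    rw [← hsymqE]; exact fun he => hqEs he.symm
  have hfd : p1 T Z' + d ∈ occs T Z := shift_mem hZsuf hf'
  have hsymfd : sym T (p1 T Z' + d) = Z'[d-1]? := hkey _ hf'
  have hmem : p1 T Z' + d ∈ dsetx T Z :=
    Finset.mem_filter.2 ⟨hfd, by rw [hsymfd]; exact fun he => hsymf he.symm⟩
  have : qE ≤ p1 T Z' + d := Nat.sInf_le hmem
  omega

/-- The property of being a one-letter left extension of a maximal repeat. -/
def GoodW (T W : List α) : Prop :=
  W ≠ [] ∧ W <:+: T ∧ 2 ≤ (occs T W.tail).card ∧ (occs T W).card < (occs T W.tail).card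

lemma occ_lt_of_good {T W W' : List α} (hW' : GoodW T W')
    (hlt : W.length < W'.length) (hsuf : W <:+ W') :
    (occs T W').card < (occs T W).card := by
  have ht : W'.tail <:+ W' := List.tail_suffix _
  have htl : W'.tail.length = W'.length - 1 := List.length_tail
  have hsuf2 : W <:+ W'.tail := suffix_of_suffix_le hsuf ht (by omega)
  calc (occs T W').card < (occs T W'.tail).card := hW'.2.2.2
    _ ≤ (occs T W).card := occ_le_of_suffix hsuf2

lemma psi_inj {T W W' : List α} (hW : GoodW T W) (hW' : GoodW T W')
    (h : psi T W = psi T W') : W = W' := by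
  obtain ⟨hWne, hWinf, hWt2, hWlt⟩ := hW
  obtain ⟨hW'ne, hW'inf, hW't2, hW'lt⟩ := hW'
  have hne : (occs T W).Nonempty := infix_iff_occs.1 hWinf
  have hne' : (occs T W').Nonempty := infix_iff_occs.1 hW'inf
  have hpos : 1 ≤ (occs T W).card := Finset.card_pos.2 hne
  have hpos' : 1 ≤ (occs T W').card := Finset.card_pos.2 hne'
  have hWl : 1 ≤ W.length := List.length_pos_iff.2 hWne
  have hW'l : 1 ≤ W'.length := List.length_pos_iff.2 hW'ne
  have hVlen : ∀ (U : List α), U ≠ [] → (occs T U).Nonempty → 1 ≤ (Vx T U).length := by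
    intro U hU hUo
    have := (Vx_spec hUo).1
    have := List.length_pos_iff.2 hU
    omega
  have hend : ∀ (U : List α), (occs T U).Nonempty → p1 T U + U.length ≤ T.length :=
    fun U hUo => occs_len (p1_mem hUo)
  have heposle : ∀ (U : List α), U ≠ [] → 2 ≤ (occs T U).card → 1 ≤ epos T (Vx T U) := by
    intro U hU h2
    have hUo : (occs T U).Nonempty := Finset.card_pos.1 (by omega)
    rw [epos_def]
    have := hVlen U hU hUo
    omega
  by_cases h1 : (occs T W).card ≤ 1 <;> by_cases h1' : (occs T W').card ≤ 1
  · rw [psi, if_pos h1, psi, if_pos h1'] at h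
    rcases lt_trichotomy W.length W'.length with hc | hc | hc
    · have hsuf : W <:+ W' := seg_suffix (p1_mem hne) (p1_mem hne') h hc.le
      have := occ_lt_of_good ⟨hW'ne, hW'inf, hW't2, hW'lt⟩ hc hsuf
      omega
    · exact seg_eq (p1_mem hne) (p1_mem hne') h hc
    · have hsuf : W' <:+ W := seg_suffix (p1_mem hne') (p1_mem hne) h.symm hc.le
      have := occ_lt_of_good ⟨hWne, hWinf, hWt2, hWlt⟩ hc hsuf
      omega
  · rw [psi, if_pos h1, psi, if_neg h1'] at h
    have := hend W hne
    have := heposle W' hW'ne (by omega)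
    omega
  · rw [psi, if_neg h1, psi, if_pos h1'] at h
    have := hend W' hne'
    have := heposle W hWne (by omega)
    omega
  · rw [psi, if_neg h1, psi, if_neg h1'] at h
    have h2 : 2 ≤ (occs T W).card := by omega
    have h2' : 2 ≤ (occs T W').card := by omega
    have heq : epos T (Vx T W) = epos T (Vx T W') := by omega
    have hdne := dsetx_nonempty hWne h2
    have hdne' := dsetx_nonempty hW'ne h2'
    obtain ⟨hZlen, hZsuf, _⟩ := Vx_spec (T := T) (W := W) hne
    obtain ⟨hZ'len, hZ'suf, _⟩ := Vx_spec (T := T) (W := W') hne'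
    have hZcard := Vx_card (T := T) (W := W) hne
    have hZ'card := Vx_card (T := T) (W := W') hne'
    have hZo : (occs T (Vx T W)).Nonempty := Finset.card_pos.1 (by omega)
    have hZ'o : (occs T (Vx T W')).Nonempty := Finset.card_pos.1 (by omega)
    rcases lt_trichotomy (Vx T W).length (Vx T W').length with hc | hc | hc
    · exact absurd heq (fun he => no_cross hdne hdne' hZ'o hc he)
    · have hVeq : Vx T W = Vx T W' := by
        obtain ⟨x, hx⟩ := hdne
        obtain ⟨x', hx'⟩ := hdne'
        have hqE := Nat.sInf_mem (⟨x, hx⟩ : Set.Nonempty {q | q ∈ dsetx T (Vx T W)})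
        have hqE' := Nat.sInf_mem (⟨x', hx'⟩ : Set.Nonempty {q | q ∈ dsetx T (Vx T W')})
        have h1m := (Finset.mem_filter.1 (Set.mem_setOf_eq.mp hqE)).1
        have h2m := (Finset.mem_filter.1 (Set.mem_setOf_eq.mp hqE')).1
        rw [epos_def, epos_def] at heq
        exact seg_eq h1m h2m heq hc
      rw [hVeq] at hZsuf hZcard
      rcases lt_trichotomy W.length W'.length with hc2 | hc2 | hc2
      · have hsuf : W <:+ W' := suffix_of_suffix_le hZsuf hZ'suf hc2.le
        have := occ_lt_of_good ⟨hW'ne, hW'inf, hW't2, hW'lt⟩ hc2 hsuf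
        omega
      · have := suffix_of_suffix_le hZsuf hZ'suf hc2.le
        exact this.sublist.eq_of_length hc2
      · have hsuf : W' <:+ W := suffix_of_suffix_le hZ'suf hZsuf hc2.le
        have := occ_lt_of_good ⟨hWne, hWinf, hWt2, hWlt⟩ hc2 hsuf
        omega
    · exact absurd heq.symm (fun he => no_cross hdne' hdne hZo hc he)

lemma psi_range {T W : List α} (hG : GoodW T W) :
    psi T W ∈ Finset.Icc 1 (2 * T.length) := by
  obtain ⟨hWne, hWinf, hWt2, hWlt⟩ := hG
  have hne := infix_iff_occs.1 hWinf
  have hWl : 1 ≤ W.length := List.length_pos_iff.2 hWne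
  by_cases h1 : (occs T W).card ≤ 1
  · rw [psi, if_pos h1]
    have := occs_len (p1_mem hne)
    exact Finset.mem_Icc.2 ⟨by omega, by omega⟩
  · rw [psi, if_neg h1]
    have h2 : 2 ≤ (occs T W).card := by
      have := Finset.card_pos.2 hne
      omega
    obtain ⟨x, hx⟩ := dsetx_nonempty hWne h2
    have hqE := Nat.sInf_mem (⟨x, hx⟩ : Set.Nonempty {q | q ∈ dsetx T (Vx T W)})
    have hqEo := (Finset.mem_filter.1 (Set.mem_setOf_eq.mp hqE)).1
    have hlen := occs_len hqEo
    have hVl : 1 ≤ (Vx T W).length := by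
      have := (Vx_spec hne).1
      omega
    rw [epos_def]
    exact Finset.mem_Icc.2 ⟨by omega, by omega⟩

end AuxDev

section AuxDev2
variable [DecidableEq α] [Fintype α]

lemma mem_MRset_iff {T S : List α} : S ∈ MRset T ↔ MaxRepeat T S := by
  rw [MRset, Finset.mem_filter, and_iff_right_iff_imp]
  intro hm
  have hinf : S <:+: T := by
    rw [infix_iff_occs]
    apply Finset.card_pos.1
    have := hm.1
    rw [occ_eq_card] at this
    omega
  obtain ⟨s, t, hst⟩ := hinf
  rw [List.mem_toFinset, List.mem_flatMap]
  exact ⟨S ++ t, by rw [List.mem_tails]; exact ⟨s, by rw [← hst, List.append_assoc]⟩,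
    by rw [List.mem_inits]; exact ⟨t, rfl⟩⟩

lemma occ_nil (T : List α) : occ T [] = T.length + 1 := by
  simp [occ]

lemma nil_mem_MRset {T : List α} (h : 2 ≤ T.length) : [] ∈ MRset T := by
  rw [mem_MRset_iff]
  constructor
  · rw [occ_nil]; omega
  · intro a
    have hle : occ T [a] ≤ T.length := by
      rw [occ_eq_card]
      have hsub : occs T [a] ⊆ Finset.range T.length := by
        intro i hi
        have := occs_len hi
        simp only [List.length_cons, List.length_nil] at this
        exact Finset.mem_range.2 (by omega)
      calc (occs T [a]).card ≤ (Finset.range T.length).card := Finset.card_le_card hsub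
        _ = T.length := Finset.card_range _
    constructor
    · rw [occ_nil]; omega
    · rw [occ_nil]; simpa using by omega

lemma rext_nil (T : List α) : rext T [] = T.toFinset.card := by
  rw [rext]
  congr 1
  ext a
  simp only [Finset.mem_filter, Finset.mem_univ, true_and, List.nil_append, List.mem_toFinset]
  constructor
  · intro h
    exact h.sublist.mem (List.mem_singleton_self a)
  · intro h
    obtain ⟨s, t, hst⟩ := List.append_of_mem h
    exact ⟨s, t, by rw [hst]; simp⟩

lemma sigma_le_er {T : List α} (h : 2 ≤ T.length) : T.toFinset.card ≤ er T := by
  rw [← rext_nil T]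
  exact Finset.single_le_sum (fun _ _ => Nat.zero_le _) (nil_mem_MRset h)

lemma rext_pos {T S : List α} (hS : S ∈ MRset T) : 1 ≤ rext T S := by
  have h2 : 2 ≤ (occs T S).card := (mem_MRset_iff.1 hS).1
  obtain ⟨p, hp, q, hq, hpq⟩ := (Finset.one_lt_card (s := occs T S)).1 (by omega)
  set i := min p q with hi
  set j := max p q with hj
  have hio : i ∈ occs T S := by rcases min_choice p q with h | h <;> rw [hi, h] <;> assumption
  have hjo : j ∈ occs T S := by rcases max_choice p q with h | h <;> rw [hj, h] <;> assumption
  have hij : i < j := by omega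
  have hjl := occs_len hjo
  have hil : i + S.length < T.length := by
    have := occs_len hio
    omega
  obtain ⟨him, r, hr⟩ := mem_occs.1 hio
  have hrd : r = T.drop (i + S.length) := by
    have : (S ++ r).drop S.length = r := List.drop_left
    rw [hr] at this
    rw [← this, List.drop_drop]
  have hb : (S ++ [T[i + S.length]]) <:+: T := by
    rw [infix_iff_occs]
    refine ⟨i, mem_occs.2 ⟨by omega, ?_⟩⟩
    rw [← hr, hrd, List.drop_eq_getElem_cons hil]
    rw [List.prefix_append_right_inj]
    exact ⟨_, rfl⟩
  apply Finset.card_pos.2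
  exact ⟨T[i + S.length], Finset.mem_filter.2 ⟨Finset.mem_univ _, hb⟩⟩

lemma lext_le_sigma {T S : List α} : lext T S ≤ T.toFinset.card := by
  apply Finset.card_le_card
  intro a ha
  have h := (Finset.mem_filter.1 ha).2
  rw [List.mem_toFinset]
  exact h.sublist.mem (List.mem_cons_self)

lemma el_le_sigma_mul_er (T : List α) : el T ≤ T.toFinset.card * er T := by
  rw [el, er, Finset.mul_sum]
  apply Finset.sum_le_sum
  intro S hS
  calc lext T S ≤ T.toFinset.card := lext_le_sigma
    _ = T.toFinset.card * 1 := (mul_one _).symm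
    _ ≤ T.toFinset.card * rext T S := Nat.mul_le_mul_left _ (rext_pos hS)

lemma el_le_two_len (T : List α) : el T ≤ 2 * T.length := by
  have hcard : el T =
      ((MRset T).sigma fun S => Finset.univ.filter fun a : α => (a :: S) <:+: T).card := by
    rw [Finset.card_sigma]; rfl
  rw [hcard]
  have hG : ∀ x ∈ (MRset T).sigma fun S => Finset.univ.filter fun a : α => (a :: S) <:+: T,
      GoodW T (x.2 :: x.1) := by
    intro x hx
    obtain ⟨hx1, hx2⟩ := Finset.mem_sigma.1 hx
    have hm := mem_MRset_iff.1 hx1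
    have hinf := (Finset.mem_filter.1 hx2).2
    exact ⟨List.cons_ne_nil _ _, hinf, hm.1, (hm.2 x.2).1⟩
  calc _ ≤ (Finset.Icc 1 (2 * T.length)).card := by
        apply Finset.card_le_card_of_injOn (fun x => psi T (x.2 :: x.1))
        · exact fun x hx => psi_range (hG x hx)
        · intro x hx y hy hxy
          have hWeq := psi_inj (hG x hx) (hG y hy) hxy
          obtain ⟨x1, x2⟩ := x
          obtain ⟨y1, y2⟩ := y
          simp only [List.cons.injEq] at hWeq
          obtain ⟨ha, hb⟩ := hWeq
          subst ha
          subst hb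
          rfl
    _ = 2 * T.length := by rw [Nat.card_Icc]; omega

end AuxDev2

/-- `el(T) ≤ min{2n/σ, σ} · er(T)`. -/
theorem el_le_min_mul_er [DecidableEq α] [Fintype α] (T : List α) (h : 2 ≤ T.length) :
    (el T : ℝ) ≤
      min (2 * T.length / (T.toFinset.card : ℝ)) (T.toFinset.card : ℝ) * er T := by
  have hσ1 : 1 ≤ T.toFinset.card := by
    rcases T with _ | ⟨a, T'⟩
    · simp at h
    · exact Finset.card_pos.2 ⟨a, by simp⟩
  have hA : (el T : ℝ) ≤ 2 * T.length := by exact_mod_cast el_le_two_len T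
  have hB : (el T : ℝ) ≤ T.toFinset.card * er T := by exact_mod_cast el_le_sigma_mul_er T
  have hC : (T.toFinset.card : ℝ) ≤ er T := by exact_mod_cast sigma_le_er h
  have hσpos : (0:ℝ) < T.toFinset.card := by exact_mod_cast hσ1
  rcases le_total (2 * (T.length:ℝ) / T.toFinset.card) (T.toFinset.card : ℝ) with hm | hm
  · rw [min_eq_left hm]
    calc (el T : ℝ) ≤ 2 * T.length := hA
      _ = 2 * T.length / T.toFinset.card * T.toFinset.card := by field_simp
      _ ≤ 2 * T.length / T.toFinset.card * er T := by
          apply mul_le_mul_of_nonneg_left hC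
          positivity
  · rw [min_eq_right hm]
    exact hB
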